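/- Let n be a positive integer, let G be a real n×n matrix, let x, b be vectors in ℝⁿ, and let λ ≥ 0. Then the supremum, over all n×n matrices E with Frobenius norm ‖E‖_F ≤ λ and all vectors e ∈ ℝⁿ with Euclidean norm ‖e‖₂ ≤ λ, of the worst-case residual ‖(G + E)x − (b + e)‖₂ equals ‖Gx − b‖₂ + λ‖x‖₂ + λ. -/

import Mathlib

/-- Euclidean norm of a vector in ℝⁿ. -/
noncomputable def eNorm {n : ℕ} (v : Fin n → ℝ) : ℝ :=
  Real.sqrt (∑ i, v i ^ 2)

/-- Frobenius norm of a real matrix. -/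
noncomputable def fNorm {m n : ℕ} (M : Matrix (Fin m) (Fin n) ℝ) : ℝ :=
  Real.sqrt (∑ i, ∑ j, M i j ^ 2)

lemma eNorm_nonneg {n : ℕ} (v : Fin n → ℝ) : 0 ≤ eNorm v := Real.sqrt_nonneg _

lemma eNorm_eq_norm {n : ℕ} (v : Fin n → ℝ) :
    eNorm v = ‖(WithLp.equiv 2 (Fin n → ℝ)).symm v‖ := by
  rw [EuclideanSpace.norm_eq]
  simp [eNorm, Real.norm_eq_abs, sq_abs]

lemma eNorm_add_le {n : ℕ} (v w : Fin n → ℝ) : eNorm (v + w) ≤ eNorm v + eNorm w := by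
  rw [eNorm_eq_norm, eNorm_eq_norm, eNorm_eq_norm]
  exact norm_add_le _ _

lemma eNorm_smul {n : ℕ} (c : ℝ) (v : Fin n → ℝ) : eNorm (c • v) = |c| * eNorm v := by
  rw [eNorm_eq_norm, eNorm_eq_norm]
  have : (WithLp.equiv 2 (Fin n → ℝ)).symm (c • v)
      = c • (WithLp.equiv 2 (Fin n → ℝ)).symm v := rfl
  rw [this, norm_smul, Real.norm_eq_abs]

lemma eNorm_neg {n : ℕ} (v : Fin n → ℝ) : eNorm (-v) = eNorm v := by
  have : (-v) = (-1 : ℝ) • v := by funext i; simp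
  rw [this, eNorm_smul]; simp

lemma eNorm_eq_zero {n : ℕ} {v : Fin n → ℝ} (h : eNorm v = 0) : v = 0 := by
  have hs : ∑ i, v i ^ 2 = 0 := by
    have h1 : ∑ i, v i ^ 2 ≤ 0 := Real.sqrt_eq_zero'.mp h
    have h2 : 0 ≤ ∑ i, v i ^ 2 := Finset.sum_nonneg fun i _ => sq_nonneg _
    linarith
  funext i
  have := (Finset.sum_eq_zero_iff_of_nonneg (fun i _ => sq_nonneg (v i))).mp hs i (Finset.mem_univ i)
  simpa using pow_eq_zero_iff (n := 2) (by norm_num) |>.mp this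

lemma eNorm_mulVec_le {n : ℕ} (E : Matrix (Fin n) (Fin n) ℝ) (x : Fin n → ℝ) :
    eNorm (E.mulVec x) ≤ fNorm E * eNorm x := by
  rw [eNorm, fNorm, eNorm, ← Real.sqrt_mul (by positivity)]
  apply Real.sqrt_le_sqrt
  rw [Finset.sum_mul]
  apply Finset.sum_le_sum
  intro i _
  simp only [Matrix.mulVec, dotProduct]
  exact Finset.sum_mul_sq_le_sq_mul_sq Finset.univ (E i) x

lemma sum_sq_eq {n : ℕ} (v : Fin n → ℝ) : ∑ i, v i ^ 2 = (eNorm v) ^ 2 :=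
  (Real.sq_sqrt (Finset.sum_nonneg fun i _ => sq_nonneg _)).symm

/-- The supremum of the worst-case residual ‖(G + E)x − (b + e)‖₂ over all
perturbations with ‖E‖_F ≤ λ and ‖e‖₂ ≤ λ equals ‖Gx − b‖₂ + λ‖x‖₂ + λ. -/
theorem robust_residual_sup_eq (n : ℕ) (hn : 0 < n)
    (G : Matrix (Fin n) (Fin n) ℝ) (x b : Fin n → ℝ) (lam : ℝ) (hlam : 0 ≤ lam) :
    sSup {r : ℝ | ∃ (E : Matrix (Fin n) (Fin n) ℝ) (e : Fin n → ℝ),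
        fNorm E ≤ lam ∧ eNorm e ≤ lam ∧
        r = eNorm ((G + E).mulVec x - (b + e))} =
      eNorm (G.mulVec x - b) + lam * eNorm x + lam := by
  set r0 : Fin n → ℝ := G.mulVec x - b with hr0
  set R : ℝ := eNorm r0 with hR
  set X : ℝ := eNorm x with hX
  set V : ℝ := R + lam * X + lam with hV
  have hRnn : 0 ≤ R := eNorm_nonneg _
  have hXnn : 0 ≤ X := eNorm_nonneg _
  have hVnn : 0 ≤ V := by positivity
  -- upper bound
  have hub : ∀ r ∈ {r : ℝ | ∃ (E : Matrix (Fin n) (Fin n) ℝ) (e : Fin n → ℝ),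
      fNorm E ≤ lam ∧ eNorm e ≤ lam ∧
      r = eNorm ((G + E).mulVec x - (b + e))}, r ≤ V := by
    rintro r ⟨E, e, hE, he, rfl⟩
    have hsplit : (G + E).mulVec x - (b + e) = r0 + (E.mulVec x + (-e)) := by
      rw [Matrix.add_mulVec, hr0]; abel
    calc eNorm ((G + E).mulVec x - (b + e))
        = eNorm (r0 + (E.mulVec x + (-e))) := by rw [hsplit]
      _ ≤ eNorm r0 + eNorm (E.mulVec x + (-e)) := eNorm_add_le _ _
      _ ≤ R + (eNorm (E.mulVec x) + eNorm (-e)) := by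
            exact add_le_add_right (eNorm_add_le _ _) _
      _ ≤ R + (fNorm E * eNorm x + eNorm e) := by
            rw [eNorm_neg]
            exact add_le_add_right (add_le_add_left (eNorm_mulVec_le E x) _) _
      _ ≤ V := by
            have h1 : fNorm E * eNorm x ≤ lam * X :=
              mul_le_mul_of_nonneg_right hE hXnn
            rw [hV]; linarith
  -- unit direction u with r0 = R • u
  obtain ⟨u, hu1, hru⟩ : ∃ u : Fin n → ℝ, eNorm u = 1 ∧ r0 = R • u := by
    by_cases h0 : R = 0
    · refine ⟨Pi.single (M := fun _ : Fin n => ℝ) ⟨0, hn⟩ 1, ?_, ?_⟩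
      · rw [eNorm]
        have : ∑ j, (Pi.single (M := fun _ : Fin n => ℝ) ⟨0, hn⟩ 1) j ^ 2 = 1 := by
          simp [Pi.single_apply, apply_ite (· ^ (2:ℕ))]
        rw [this, Real.sqrt_one]
      · rw [eNorm_eq_zero h0, h0, zero_smul]
    · refine ⟨R⁻¹ • r0, ?_, ?_⟩
      · rw [eNorm_smul, abs_inv, abs_of_nonneg hRnn, ← hR, inv_mul_cancel₀ h0]
      · rw [smul_inv_smul₀ h0]
  have hu2 : ∑ i, u i ^ 2 = 1 := by rw [sum_sq_eq, hu1, one_pow]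
  -- perturbation matrix with E x = (lam * X) • u and fNorm E ≤ lam
  obtain ⟨E, hEf, hEx⟩ : ∃ E : Matrix (Fin n) (Fin n) ℝ,
      fNorm E ≤ lam ∧ E.mulVec x = (lam * X) • u := by
    by_cases hx0 : X = 0
    · refine ⟨0, ?_, ?_⟩
      · rw [fNorm]; simp [hlam]
      · rw [hx0, mul_zero, zero_smul, Matrix.zero_mulVec]
    · have hsx : ∑ j, x j ^ 2 = X ^ 2 := sum_sq_eq x
      refine ⟨Matrix.of fun i j => lam * u i * (x j / X), ?_, ?_⟩
      · rw [fNorm]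
        have hsum : ∑ i, ∑ j, (lam * u i * (x j / X)) ^ 2 = lam ^ 2 := by
          have : ∀ i, ∑ j, (lam * u i * (x j / X)) ^ 2
              = lam ^ 2 * u i ^ 2 * ((∑ j, x j ^ 2) / X ^ 2) := by
            intro i
            rw [Finset.sum_div, Finset.mul_sum]
            refine Finset.sum_congr rfl fun j _ => ?_
            field_simp
          simp_rw [this, hsx, div_self (pow_ne_zero 2 hx0), mul_one,
            ← Finset.mul_sum, hu2, mul_one]
        simp only [Matrix.of_apply]
        rw [hsum, Real.sqrt_sq hlam]
      · funext i
        simp only [Matrix.mulVec, dotProduct, Matrix.of_apply, Pi.smul_apply,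
          smul_eq_mul]
        have : ∑ j, lam * u i * (x j / X) * x j
            = lam * u i * ((∑ j, x j ^ 2) / X) := by
          rw [Finset.sum_div, Finset.mul_sum]
          refine Finset.sum_congr rfl fun j _ => ?_
          field_simp
        rw [this, hsx]
        field_simp
  -- the maximizer is in the set
  have hmem : V ∈ {r : ℝ | ∃ (E : Matrix (Fin n) (Fin n) ℝ) (e : Fin n → ℝ),
      fNorm E ≤ lam ∧ eNorm e ≤ lam ∧
      r = eNorm ((G + E).mulVec x - (b + e))} := by
    refine ⟨E, -(lam • u), hEf, ?_, ?_⟩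
    · rw [eNorm_neg, eNorm_smul, hu1, mul_one, abs_of_nonneg hlam]
    · have : (G + E).mulVec x - (b + -(lam • u)) = V • u := by
        rw [Matrix.add_mulVec, hEx]
        have : G.mulVec x - b = R • u := hru
        have hGb : G.mulVec x = b + R • u := by
          rw [← this]; abel
        rw [hGb, hV]
        funext i
        simp only [Pi.add_apply, Pi.sub_apply, Pi.smul_apply, Pi.neg_apply, smul_eq_mul]
        ring
      rw [this, eNorm_smul, hu1, mul_one, abs_of_nonneg hVnn]
  apply le_antisymm
  · exact csSup_le ⟨V, hmem⟩ hub
  · exact le_csSup ⟨V, hub⟩ hmem
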